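/- Let L be a bounded self-adjoint positive semidefinite invertible operator on a Hilbert space H, S a closed subspace with ‖φ‖ ≤ Λ‖Lφ‖ for all φ ∈ S, and f ∈ H with ‖L^k f‖ ≤ ω^k‖f‖ for all k ∈ ℕ, where ω < 1/Λ. For k = 2^l, let Y_k be any element of H with f − Y_k ∈ S and ‖L^k Y_k‖ ≤ ‖L^k f‖. Then ‖f − Y_k‖ ≤ 2(Λω)^k ‖f‖; in particular Y_k → f as l → ∞. -/

import Mathlib

open Filter

local notation "⟪" x ", " y "⟫" => @inner ℂ _ _ x y

lemma aux_sq {H : Type*} [NormedAddCommGroup H] [InnerProductSpace ℂ H] [CompleteSpace H]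
    (A : H →L[ℂ] H) (hA : IsSelfAdjoint A) (x : H) :
    ‖A x‖ ^ 2 ≤ ‖A (A x)‖ * ‖x‖ := by
  have h1 : (‖A x‖ : ℝ) ^ 2 = RCLike.re ⟪A x, A x⟫ := by
    rw [← inner_self_eq_norm_sq (𝕜 := ℂ)]
  have h2 : ⟪A x, A x⟫ = ⟪A (A x), x⟫ := by
    rw [← ContinuousLinearMap.adjoint_inner_left, hA.adjoint_eq]
  calc ‖A x‖ ^ 2 = RCLike.re ⟪A (A x), x⟫ := by rw [h1, h2]
    _ ≤ ‖(⟪A (A x), x⟫ : ℂ)‖ := RCLike.re_le_norm _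
    _ ≤ ‖A (A x)‖ * ‖x‖ := norm_inner_le_norm _ _

lemma aux_pow {H : Type*} [NormedAddCommGroup H] [InnerProductSpace ℂ H] [CompleteSpace H]
    (L : H →L[ℂ] H) (hA : IsSelfAdjoint L) (x : H) (l : ℕ) :
    ‖L x‖ ^ (2 ^ l) ≤ ‖(L ^ (2 ^ l)) x‖ * ‖x‖ ^ (2 ^ l - 1) := by
  induction l with
  | zero => simp
  | succ l ih =>
    have hx0 : (0:ℝ) ≤ ‖x‖ := norm_nonneg x
    have key : ‖(L ^ (2 ^ l)) x‖ ^ 2 ≤ ‖(L ^ (2 ^ (l+1))) x‖ * ‖x‖ := by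
      have := aux_sq (L ^ (2 ^ l)) (hA.pow _) x
      have h2 : (L ^ (2 ^ l)) ((L ^ (2 ^ l)) x) = (L ^ (2 ^ (l+1))) x := by
        rw [pow_succ, pow_mul, sq]; rfl
      rwa [h2] at this
    calc ‖L x‖ ^ (2 ^ (l+1)) = (‖L x‖ ^ (2 ^ l)) ^ 2 := by
          rw [← pow_mul, pow_succ]
      _ ≤ (‖(L ^ (2 ^ l)) x‖ * ‖x‖ ^ (2 ^ l - 1)) ^ 2 :=
          pow_le_pow_left₀ (pow_nonneg (norm_nonneg _) _) ih 2
      _ = ‖(L ^ (2 ^ l)) x‖ ^ 2 * ‖x‖ ^ (2 * (2 ^ l - 1)) := by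
          rw [mul_pow, ← pow_mul, mul_comm (2 ^ l - 1) 2]
      _ ≤ (‖(L ^ (2 ^ (l+1))) x‖ * ‖x‖) * ‖x‖ ^ (2 * (2 ^ l - 1)) := by
          exact mul_le_mul_of_nonneg_right key (pow_nonneg hx0 _)
      _ = ‖(L ^ (2 ^ (l+1))) x‖ * ‖x‖ ^ (2 ^ (l+1) - 1) := by
          rw [mul_assoc, ← pow_succ']
          congr 2
          have : 1 ≤ 2 ^ l := Nat.one_le_two_pow
          omega

/-- Let `L` be a bounded self-adjoint positive semidefinite invertible
operator on a complex Hilbert space `H`, `S` a closed subspace with `‖φ‖ ≤ Λ‖Lφ‖` for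
`φ ∈ S`, and `f ∈ H` with `‖L^k f‖ ≤ ω^k ‖f‖` for all `k ∈ ℕ`, where `ω < 1/Λ`.
For `k = 2^l`, let `Y l` satisfy `f - Y l ∈ S` and `‖L^k (Y l)‖ ≤ ‖L^k f‖`.
Then `‖f - Y l‖ ≤ 2 (Λω)^k ‖f‖`; in particular `Y l → f` as `l → ∞`. -/
theorem stmt_17 {H : Type*} [NormedAddCommGroup H] [InnerProductSpace ℂ H] [CompleteSpace H]
    (L : H →L[ℂ] H) (hL : L.IsPositive) (hinv : IsUnit L)
    (S : Submodule ℂ H) (hS : IsClosed (S : Set H))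
    (Λ : ℝ) (hΛ : 0 < Λ) (hPoin : ∀ φ ∈ S, ‖φ‖ ≤ Λ * ‖L φ‖)
    (ω : ℝ) (hω : 0 ≤ ω) (hωΛ : ω < 1 / Λ)
    (f : H) (hf : ∀ k : ℕ, ‖(L ^ k) f‖ ≤ ω ^ k * ‖f‖)
    (Y : ℕ → H) (hYS : ∀ l : ℕ, f - Y l ∈ S)
    (hYmin : ∀ l : ℕ, ‖(L ^ (2 ^ l)) (Y l)‖ ≤ ‖(L ^ (2 ^ l)) f‖) :
    (∀ l : ℕ, ‖f - Y l‖ ≤ 2 * (Λ * ω) ^ (2 ^ l) * ‖f‖) ∧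
      Tendsto Y atTop (nhds f) := by
  have hsa : IsSelfAdjoint L := hL.isSelfAdjoint
  have main : ∀ l : ℕ, ‖f - Y l‖ ≤ 2 * (Λ * ω) ^ (2 ^ l) * ‖f‖ := by
    intro l
    set k := 2 ^ l with hk
    set φ := f - Y l with hφ
    by_cases hφ0 : φ = 0
    · rw [hφ0, norm_zero]
      positivity
    have hφpos : 0 < ‖φ‖ := norm_pos_iff.mpr hφ0
    have hLk : ‖(L ^ k) φ‖ ≤ 2 * ω ^ k * ‖f‖ := by
      have : (L ^ k) φ = (L ^ k) f - (L ^ k) (Y l) := by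
        simp [hφ, map_sub]
      rw [this]
      calc ‖(L ^ k) f - (L ^ k) (Y l)‖ ≤ ‖(L ^ k) f‖ + ‖(L ^ k) (Y l)‖ := norm_sub_le _ _
        _ ≤ ‖(L ^ k) f‖ + ‖(L ^ k) f‖ := by linarith [hYmin l]
        _ = 2 * ‖(L ^ k) f‖ := by ring
        _ ≤ 2 * (ω ^ k * ‖f‖) := by linarith [hf k]
        _ = 2 * ω ^ k * ‖f‖ := by ring
    have hpow : ‖φ‖ ^ k ≤ Λ ^ k * (2 * ω ^ k * ‖f‖) * ‖φ‖ ^ (k - 1) := by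
      calc ‖φ‖ ^ k ≤ (Λ * ‖L φ‖) ^ k :=
            pow_le_pow_left₀ (norm_nonneg _) (hPoin φ (hYS l)) k
        _ = Λ ^ k * ‖L φ‖ ^ k := mul_pow _ _ _
        _ ≤ Λ ^ k * (‖(L ^ k) φ‖ * ‖φ‖ ^ (k - 1)) := by
            exact mul_le_mul_of_nonneg_left (aux_pow L hsa φ l) (pow_nonneg hΛ.le k)
        _ ≤ Λ ^ k * ((2 * ω ^ k * ‖f‖) * ‖φ‖ ^ (k - 1)) := by
            have : (0:ℝ) ≤ ‖φ‖ ^ (k-1) := pow_nonneg (norm_nonneg _) _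
            exact mul_le_mul_of_nonneg_left (mul_le_mul_of_nonneg_right hLk this)
              (pow_nonneg hΛ.le k)
        _ = Λ ^ k * (2 * ω ^ k * ‖f‖) * ‖φ‖ ^ (k - 1) := by ring
    have hk1 : k = (k - 1) + 1 := by
      have : 1 ≤ k := Nat.one_le_two_pow
      omega
    have hφk : ‖φ‖ ^ k = ‖φ‖ ^ (k - 1) * ‖φ‖ := by
      rw [← pow_succ, Nat.sub_add_cancel Nat.one_le_two_pow]
    have hcancel : ‖φ‖ ≤ Λ ^ k * (2 * ω ^ k * ‖f‖) := by
      have hp : (0:ℝ) < ‖φ‖ ^ (k-1) := pow_pos hφpos _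
      rw [hφk] at hpow
      nlinarith
    calc ‖φ‖ ≤ Λ ^ k * (2 * ω ^ k * ‖f‖) := hcancel
      _ = 2 * (Λ * ω) ^ k * ‖f‖ := by rw [mul_pow]; ring
  refine ⟨main, ?_⟩
  have hΛω : Λ * ω < 1 := by
    rw [lt_div_iff₀ hΛ] at hωΛ; linarith
  rw [tendsto_iff_norm_sub_tendsto_zero]
  have h0 : Tendsto (fun l : ℕ => (Λ * ω) ^ (2 ^ l)) atTop (nhds 0) :=
    (tendsto_pow_atTop_nhds_zero_of_lt_one (by positivity) hΛω).comp
      (tendsto_pow_atTop_atTop_of_one_lt one_lt_two)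
  have hlim : Tendsto (fun l : ℕ => 2 * (Λ * ω) ^ (2 ^ l) * ‖f‖) atTop (nhds 0) := by
    have := (h0.const_mul 2).mul_const ‖f‖
    simpa using this
  exact squeeze_zero (fun l => norm_nonneg _)
    (fun l => by rw [norm_sub_rev]; exact main l) hlim
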